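/- (MacMahon's formula, q-Simon Newcomb problem.) Let p₁,…,p_m be positive integers with p = p₁+⋯+p_m. In the ring of formal power series in t with coefficients in ℤ[q], the identity (∏_{i=0}^{p} (1 − t q^i)) · ∑_{n≥0} t^n ∏_{j=1}^{m} qbinom(n+p_j, p_j) = ∑_w t^{des(w)} q^{maj(w)} holds, where the sum on the right is over all multiset permutations w of {1^{p₁},…,m^{p_m}}. -/

import Mathlib

open scoped Classical

/-- The descent set of the word `w 1, …, w p` (1-based positions). -/
def desSet (p : ℕ) (f : Fin p → ℕ) : Finset ℕ :=
  (Finset.Ico 1 p).filter fun i =>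
    ∃ (h1 : i - 1 < p) (h2 : i < p), f ⟨i, h2⟩ < f ⟨i - 1, h1⟩

/-- `(q)_n = (1-q)(1-q²)⋯(1-qⁿ)`. -/
noncomputable def qpoch (n : ℕ) : Polynomial ℤ :=
  ∏ i ∈ Finset.Icc 1 n, (1 - Polynomial.X ^ i)

section aux
open Polynomial Finset

lemma qpoch_zero : qpoch 0 = 1 := by simp [qpoch]

lemma qpoch_succ (n : ℕ) : qpoch (n + 1) = qpoch n * (1 - X ^ (n + 1)) := by
  rw [qpoch, qpoch, Finset.prod_Icc_succ_top (by omega)]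

lemma qpoch_eval_zero (n : ℕ) : Polynomial.eval 0 (qpoch n) = 1 := by
  rw [qpoch, Polynomial.eval_prod]
  apply Finset.prod_eq_one
  intro i hi
  rw [Finset.mem_Icc] at hi
  simp [zero_pow (show i ≠ 0 by omega)]

lemma qpoch_ne_zero (n : ℕ) : qpoch n ≠ 0 := by
  intro h
  have := qpoch_eval_zero n
  rw [h] at this
  simp at this

section qb
variable (qbinom : ℕ → ℕ → Polynomial ℤ)
    (hqb : ∀ a b : ℕ, b ≤ a → qbinom a b * (qpoch b * qpoch (a - b)) = qpoch a)

include hqb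

lemma qb_zero (n : ℕ) : qbinom n 0 = 1 := by
  have h := hqb n 0 (Nat.zero_le n)
  simp [qpoch_zero] at h
  exact mul_right_cancel₀ (qpoch_ne_zero n) (by rw [h, one_mul])

lemma qb_self (n : ℕ) : qbinom n n = 1 := by
  have h := hqb n n le_rfl
  simp [qpoch_zero] at h
  exact mul_right_cancel₀ (qpoch_ne_zero n) (by rw [h, one_mul])

/-- q-Pascal, form A. -/
lemma pascalA (n k : ℕ) :
    qbinom (n + k + 2) (k + 1)
      = qbinom (n + k + 1) (k + 1) + X ^ (n + 1) * qbinom (n + k + 1) k := by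
  apply mul_right_cancel₀ (mul_ne_zero (qpoch_ne_zero (k+1)) (qpoch_ne_zero (n+1)))
  have h1 := hqb (n + k + 2) (k + 1) (by omega)
  rw [(by omega : n + k + 2 - (k + 1) = n + 1)] at h1
  have h2 := hqb (n + k + 1) (k + 1) (by omega)
  rw [(by omega : n + k + 1 - (k + 1) = n)] at h2
  have h3 := hqb (n + k + 1) k (by omega)
  rw [(by omega : n + k + 1 - k = n + 1)] at h3
  have h4 : qpoch (n + 1) = qpoch n * (1 - X ^ (n + 1)) := qpoch_succ n
  have h5 : qpoch (k + 1) = qpoch k * (1 - X ^ (k + 1)) := qpoch_succ k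
  have h6 : qpoch (n + k + 2) = qpoch (n + k + 1) * (1 - X ^ (n + k + 2)) := qpoch_succ (n + k + 1)
  calc qbinom (n + k + 2) (k + 1) * (qpoch (k+1) * qpoch (n+1))
      = qpoch (n + k + 1) * (1 - X ^ (n + k + 2)) := by rw [h1, h6]
    _ = (qbinom (n+k+1) (k+1) * (qpoch (k+1) * qpoch n)) * (1 - X^(n+1))
          + X^(n+1) * ((qbinom (n+k+1) k * (qpoch k * qpoch (n+1))) * (1 - X^(k+1))) := by
        rw [h2, h3]; ring
    _ = (qbinom (n + k + 1) (k + 1) + X ^ (n + 1) * qbinom (n + k + 1) k)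
          * (qpoch (k+1) * qpoch (n+1)) := by
        rw [h4, h5]; ring

/-- q-Pascal, form B. -/
lemma pascalB (n k : ℕ) :
    qbinom (n + k + 2) (k + 1)
      = qbinom (n + k + 1) k + X ^ (k + 1) * qbinom (n + k + 1) (k + 1) := by
  apply mul_right_cancel₀ (mul_ne_zero (qpoch_ne_zero (k+1)) (qpoch_ne_zero (n+1)))
  have h1 := hqb (n + k + 2) (k + 1) (by omega)
  rw [(by omega : n + k + 2 - (k + 1) = n + 1)] at h1
  have h2 := hqb (n + k + 1) (k + 1) (by omega)
  rw [(by omega : n + k + 1 - (k + 1) = n)] at h2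
  have h3 := hqb (n + k + 1) k (by omega)
  rw [(by omega : n + k + 1 - k = n + 1)] at h3
  have h4 : qpoch (n + 1) = qpoch n * (1 - X ^ (n + 1)) := qpoch_succ n
  have h5 : qpoch (k + 1) = qpoch k * (1 - X ^ (k + 1)) := qpoch_succ k
  have h6 : qpoch (n + k + 2) = qpoch (n + k + 1) * (1 - X ^ (n + k + 2)) := qpoch_succ (n + k + 1)
  calc qbinom (n + k + 2) (k + 1) * (qpoch (k+1) * qpoch (n+1))
      = qpoch (n + k + 1) * (1 - X ^ (n + k + 2)) := by rw [h1, h6]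
    _ = (qbinom (n+k+1) k * (qpoch k * qpoch (n+1))) * (1 - X^(k+1))
          + X^(k+1) * ((qbinom (n+k+1) (k+1) * (qpoch (k+1) * qpoch n)) * (1 - X^(n+1))) := by
        rw [h2, h3]; ring
    _ = (qbinom (n + k + 1) k + X ^ (k + 1) * qbinom (n + k + 1) (k + 1))
          * (qpoch (k+1) * qpoch (n+1)) := by
        rw [h4, h5]; ring
end qb

/-- adjacency implies full relation, for transitive r -/
lemma rel_of_adjacent {p : ℕ} {α : Type*} (r : α → α → Prop) [IsTrans α r] (f : Fin p → α)
    (h : ∀ k (hk : k + 1 < p), r (f ⟨k, by omega⟩) (f ⟨k + 1, hk⟩)) :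
    ∀ a b : Fin p, a < b → r (f a) (f b) := by
  have key : ∀ d (a : ℕ) (hd : a + d + 1 < p), r (f ⟨a, by omega⟩) (f ⟨a + d + 1, hd⟩) := by
    intro d
    induction d with
    | zero => intro a hd; exact h a hd
    | succ d ih =>
        intro a hd
        exact Trans.trans (ih a (by omega)) (h (a + d + 1) (by omega))
  intro a b hab
  have hb : (b : ℕ) = a + ((b : ℕ) - a - 1) + 1 := by
    have : (a : ℕ) < b := hab
    omega
  have := key ((b : ℕ) - a - 1) a (by omega)
  have ha : (⟨(a : ℕ), by omega⟩ : Fin p) = a := by ext; rfl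
  have hb' : (⟨(a : ℕ) + ((b : ℕ) - a - 1) + 1, by omega⟩ : Fin p) = b := by ext; simp; omega
  rwa [ha, hb'] at this

lemma antitone_of_adjacent {p : ℕ} {α : Type*} [Preorder α] (f : Fin p → α)
    (h : ∀ k (hk : k + 1 < p), f ⟨k + 1, hk⟩ ≤ f ⟨k, by omega⟩) : Antitone f := by
  haveI : IsTrans α (fun a b => b ≤ a) := ⟨fun _ _ _ h1 h2 => le_trans h2 h1⟩
  have := rel_of_adjacent (fun a b => b ≤ a) f h
  intro a b hab
  rcases eq_or_lt_of_le hab with rfl | hlt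
  · exact le_rfl
  · exact this a b hlt

/-- generating polynomial for partitions in a box -/
noncomputable def Sbox (n k : ℕ) : Polynomial ℤ :=
  ∑ g ∈ (Finset.univ : Finset (Fin k → Fin (n + 1))).filter (fun g => Antitone g),
    X ^ (∑ i, (g i : ℕ))

lemma Sbox_right_zero (n : ℕ) : Sbox n 0 = 1 := by
  have h : (Finset.univ : Finset (Fin 0 → Fin (n+1))).filter (fun g => Antitone g)
      = Finset.univ := Finset.filter_true_of_mem (fun f _ => fun a => a.elim0)
  rw [Sbox, h, Fintype.sum_unique]
  simp

lemma Sbox_left_zero (k : ℕ) : Sbox 0 k = 1 := by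
  have h : (Finset.univ : Finset (Fin k → Fin 1)).filter (fun g => Antitone g)
      = Finset.univ :=
    Finset.filter_true_of_mem (fun f _ => fun a b _ => le_of_eq (Subsingleton.elim _ _))
  haveI hu : Unique (Fin (0+1)) := ⟨⟨0⟩, fun a => by ext; omega⟩
  rw [Sbox, h, Fintype.sum_unique]
  have : ∀ i : Fin k, ((default : Fin k → Fin 1) i : ℕ) = 0 := by
    intro i; simp [Subsingleton.elim ((default : Fin k → Fin 1) i) 0]
  simp [this]

lemma Sbox_rec (n k : ℕ) :
    Sbox (n + 1) (k + 1) = Sbox n (k + 1) + X ^ (n + 1) * Sbox (n + 1) k := by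
  classical
  rw [Sbox]
  rw [← Finset.sum_filter_add_sum_filter_not
    ((Finset.univ : Finset (Fin (k+1) → Fin (n+2))).filter (fun g => Antitone g))
    (fun g => g 0 = Fin.last (n + 1))]
  have hB : ∑ g ∈ ((Finset.univ : Finset (Fin (k+1) → Fin (n+2))).filter
        (fun g => Antitone g)).filter (fun g => g 0 = Fin.last (n + 1)),
      X ^ (∑ i, (g i : ℕ)) = X ^ (n + 1) * Sbox (n + 1) k := by
    rw [Sbox, Finset.mul_sum]
    refine Finset.sum_bij' (fun g _ => Fin.tail g)
      (fun g'' _ => Fin.cons (Fin.last (n + 1)) g'') ?_ ?_ ?_ ?_ ?_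
    · intro g hg
      rw [Finset.mem_filter] at hg ⊢
      rcases hg with ⟨hg1, hg2⟩
      rw [Finset.mem_filter] at hg1
      exact ⟨Finset.mem_univ _, hg1.2.comp_monotone Fin.strictMono_succ.monotone⟩
    · intro g'' hg''
      rw [Finset.mem_filter] at hg'' ⊢
      beta_reduce
      refine ⟨Finset.mem_filter.2 ⟨Finset.mem_univ _, ?_⟩, Fin.cons_zero _ _⟩
      apply antitone_of_adjacent
      intro j hj
      match j with
      | 0 =>
          have h1 : (⟨1, hj⟩ : Fin (k+1)) = Fin.succ ⟨0, by omega⟩ := by ext; rfl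
          have h0 : (⟨0, by omega⟩ : Fin (k+1)) = 0 := rfl
          rw [h1, h0, Fin.cons_succ, Fin.cons_zero]
          exact Fin.le_last _
      | (j'+1) =>
          have h1 : (⟨j'+1+1, hj⟩ : Fin (k+1)) = Fin.succ ⟨j'+1, by omega⟩ := by ext; rfl
          have h0 : (⟨j'+1, by omega⟩ : Fin (k+1)) = Fin.succ ⟨j', by omega⟩ := by ext; rfl
          rw [h1, h0, Fin.cons_succ, Fin.cons_succ]
          exact hg''.2 (by rw [Fin.le_def]; simp)
    · intro g hg
      beta_reduce
      rw [Finset.mem_filter] at hg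
      rw [← hg.2]
      exact Fin.cons_self_tail g
    · intro g'' _
      beta_reduce
      funext i
      exact Fin.cons_succ _ _ _
    · intro g hg
      beta_reduce
      rw [Finset.mem_filter] at hg
      rw [Fin.sum_univ_succ (fun i => ((g i : ℕ)))]
      rw [hg.2, ← pow_add]
      rfl
  have hA : ∑ g ∈ ((Finset.univ : Finset (Fin (k+1) → Fin (n+2))).filter
        (fun g => Antitone g)).filter (fun g => ¬ g 0 = Fin.last (n + 1)),
      X ^ (∑ i, (g i : ℕ)) = Sbox n (k + 1) := by
    rw [Sbox]
    have hbound : ∀ g : Fin (k+1) → Fin (n+2), Antitone g → g 0 ≠ Fin.last (n+1) →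
        ∀ i, (g i : ℕ) < n + 1 := by
      intro g hg hne i
      have h1 : g i ≤ g 0 := hg (Fin.zero_le i)
      have h2 : g 0 < Fin.last (n+1) := lt_of_le_of_ne (Fin.le_last _) hne
      have := Fin.lt_def.1 h2
      simp [Fin.last] at this
      have := Fin.le_def.1 h1
      omega
    refine Finset.sum_bij' (fun g hg => fun i => (⟨(g i : ℕ), ?_⟩ : Fin (n+1)))
      (fun g' _ => fun i => (g' i).castSucc) ?_ ?_ ?_ ?_ ?_
    · rw [Finset.mem_filter] at hg
      rcases hg with ⟨hg1, hg2⟩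
      rw [Finset.mem_filter] at hg1
      exact hbound g hg1.2 hg2 i
    · intro g hg
      rw [Finset.mem_filter] at hg ⊢
      rcases hg with ⟨hg1, hg2⟩
      rw [Finset.mem_filter] at hg1
      refine ⟨Finset.mem_univ _, ?_⟩
      intro a b hab
      have := Fin.le_def.1 (hg1.2 hab)
      rw [Fin.le_def]
      simpa using this
    · intro g' hg'
      rw [Finset.mem_filter] at hg' ⊢
      refine ⟨Finset.mem_filter.2 ⟨Finset.mem_univ _, ?_⟩, ?_⟩
      · intro a b hab
        exact Fin.castSucc_le_castSucc_iff.2 (hg'.2 hab)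
      · exact ne_of_lt (Fin.castSucc_lt_last _)
    · intro g hg; beta_reduce; funext i; ext; rfl
    · intro g' hg'; beta_reduce; funext i; ext; rfl
    · intro g hg; beta_reduce; rfl
  rw [hA, hB, add_comm]

theorem qb_eq_Sbox (qbinom : ℕ → ℕ → Polynomial ℤ)
    (hqb : ∀ a b : ℕ, b ≤ a → qbinom a b * (qpoch b * qpoch (a - b)) = qpoch a) :
    ∀ k n, qbinom (n + k) k = Sbox n k
  | 0, n => by rw [Sbox_right_zero]; exact qb_zero qbinom hqb n
  | k+1, 0 => by
      rw [Sbox_left_zero, (show 0 + (k+1) = k+1 by omega)]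
      exact qb_self qbinom hqb (k+1)
  | k+1, n+1 => by
      rw [(show (n+1) + (k+1) = n + k + 2 by omega), pascalA qbinom hqb n k, Sbox_rec,
        (show n + k + 1 = n + (k+1) by omega)]
      rw [qb_eq_Sbox qbinom hqb (k+1) n]
      rw [(show n + (k + 1) = n + 1 + k by omega), qb_eq_Sbox qbinom hqb k (n+1)]
  termination_by k n => k + n

/-- number of descents strictly greater than `k` -/
def Dk (p : ℕ) (f : Fin p → ℕ) (k : ℕ) : ℕ := ((desSet p f).filter (fun i => k < i)).card

lemma desSet_bounds {p : ℕ} {f : Fin p → ℕ} {i : ℕ} (h : i ∈ desSet p f) :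
    1 ≤ i ∧ i < p := by
  have := (Finset.mem_filter.1 h).1
  rwa [Finset.mem_Ico] at this

lemma mem_desSet_succ {p : ℕ} {f : Fin p → ℕ} {k : ℕ} (h : k + 1 < p) :
    k + 1 ∈ desSet p f ↔ f ⟨k + 1, h⟩ < f ⟨k, by omega⟩ := by
  constructor
  · intro hm
    obtain ⟨hico, h1, h2, hlt⟩ := Finset.mem_filter.1 hm
    have e : (⟨k + 1 - 1, h1⟩ : Fin p) = ⟨k, by omega⟩ := by ext; simp
    rw [e] at hlt
    exact hlt
  · intro hlt
    refine Finset.mem_filter.2 ⟨Finset.mem_Ico.2 ⟨by omega, h⟩, ⟨by omega, h, ?_⟩⟩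
    have e : (⟨k + 1 - 1, by omega⟩ : Fin p) = ⟨k, by omega⟩ := by ext; simp
    rw [e]
    exact hlt

lemma Dk_succ (p : ℕ) (f : Fin p → ℕ) (k : ℕ) :
    Dk p f k = Dk p f (k + 1) + (if k + 1 ∈ desSet p f then 1 else 0) := by
  rw [Dk, Dk]
  have hsplit : (desSet p f).filter (fun i => k < i)
      = ((desSet p f).filter (fun i => k + 1 < i)) ∪ ((desSet p f).filter (fun i => i = k + 1)) := by
    ext i
    simp only [Finset.mem_filter, Finset.mem_union]
    constructor
    · rintro ⟨hi, hk⟩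
      rcases Nat.lt_or_ge (k+1) i with h' | h'
      · exact Or.inl ⟨hi, h'⟩
      · exact Or.inr ⟨hi, by omega⟩
    · rintro (⟨hi, hk⟩ | ⟨hi, hk⟩) <;> exact ⟨by assumption, by omega⟩
  rw [hsplit, Finset.card_union_of_disjoint]
  · congr 1
    rw [Finset.filter_eq']
    split <;> simp
  · rw [Finset.disjoint_left]
    intro i hi hi2
    simp only [Finset.mem_filter] at hi hi2
    omega

lemma Dk_zero_of_ge (p : ℕ) (f : Fin p → ℕ) (k : ℕ) (h : p ≤ k + 1) : Dk p f k = 0 := by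
  rw [Dk, Finset.card_eq_zero, Finset.filter_eq_empty_iff]
  intro i hi
  have := desSet_bounds hi
  omega

lemma Dk_le (p : ℕ) (f : Fin p → ℕ) (k : ℕ) : Dk p f k ≤ (desSet p f).card :=
  Finset.card_filter_le _ _

lemma Dk_zero (p : ℕ) (f : Fin p → ℕ) : Dk p f 0 = (desSet p f).card := by
  rw [Dk]
  congr 1
  apply Finset.filter_true_of_mem
  intro i hi
  have := desSet_bounds hi
  omega

lemma sum_Dk (p : ℕ) (f : Fin p → ℕ) :
    ∑ k ∈ Finset.range p, Dk p f k = (desSet p f).sum id := by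
  have h1 : ∀ k, Dk p f k = ∑ i ∈ desSet p f, if k < i then 1 else 0 := by
    intro k; rw [Dk, Finset.card_filter]
  simp_rw [h1]
  rw [Finset.sum_comm]
  apply Finset.sum_congr rfl
  intro i hi
  have hb := desSet_bounds hi
  have : ∑ k ∈ Finset.range p, (if k < i then 1 else 0)
      = ((Finset.range p).filter (fun k => k < i)).card := by
    rw [Finset.card_filter]
  rw [this]
  have : (Finset.range p).filter (fun k => k < i) = Finset.range i := by
    ext k; simp [Finset.mem_range, Finset.mem_filter]; omega
  rw [this, Finset.card_range]
  rfl

/-- compatibility of a `P`-partition `G` with a word `w` -/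
def Compat {p m n : ℕ} (w : Fin p → Fin m) (G : Fin p → Fin (n + 1)) : Prop :=
  ∀ k (hk : k + 1 < p), G ⟨k + 1, hk⟩ ≤ G ⟨k, by omega⟩ ∧
    (w ⟨k + 1, hk⟩ < w ⟨k, by omega⟩ → G ⟨k + 1, hk⟩ < G ⟨k, by omega⟩)

section compat
variable {p m n : ℕ} {w : Fin p → Fin m} {G : Fin p → Fin (n + 1)}

lemma Compat.antitone (h : Compat w G) : Antitone G := by
  apply antitone_of_adjacent
  intro k hk
  exact (h k hk).1

/-- `f` is the word as a function to ℕ -/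
lemma Compat.ge_D (h : Compat w G) : ∀ k (hk : k < p),
    Dk p (fun a => ((w a : ℕ))) k ≤ (G ⟨k, hk⟩ : ℕ) := by
  set f := fun a : Fin p => ((w a : ℕ)) with hf
  have key : ∀ t k (hk : k < p), p - 1 - k ≤ t → Dk p f k ≤ (G ⟨k, hk⟩ : ℕ) := by
    intro t
    induction t with
    | zero =>
        intro k hk ht
        rw [Dk_zero_of_ge p f k (by omega)]
        omega
    | succ t ih =>
        intro k hk ht
        by_cases hk1 : k + 1 < p
        · have h1 := ih (k + 1) hk1 (by omega)
          have h2 := Dk_succ p f k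
          have h3 := h k hk1
          by_cases hdes : k + 1 ∈ desSet p f
          · have hw : w ⟨k + 1, hk1⟩ < w ⟨k, by omega⟩ := by
              have := (mem_desSet_succ hk1).1 hdes
              exact Fin.lt_def.2 this
            have h4 := Fin.lt_def.1 (h3.2 hw)
            rw [if_pos hdes] at h2
            omega
          · rw [if_neg hdes] at h2
            have h4 := Fin.le_def.1 h3.1
            omega
        · rw [Dk_zero_of_ge p f k (by omega)]
          omega
  intro k hk
  exact key (p - 1 - k) k hk le_rfl

lemma Compat.le_head (h : Compat w G) : ∀ k (hk : k < p) (h0 : 0 < p),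
    (G ⟨k, hk⟩ : ℕ) + ((desSet p (fun a => ((w a : ℕ)))).card
      - Dk p (fun a => ((w a : ℕ))) k) ≤ (G ⟨0, h0⟩ : ℕ) := by
  set f := fun a : Fin p => ((w a : ℕ)) with hf
  intro k
  induction k with
  | zero =>
      intro hk h0
      rw [Dk_zero]
      omega
  | succ k ih =>
      intro hk h0
      have h1 := ih (by omega) h0
      have h2 := Dk_succ p f k
      have h3 := h k hk
      have hDle := Dk_le p f k
      have hDle1 := Dk_le p f (k + 1)
      by_cases hdes : k + 1 ∈ desSet p f
      · have hw : w ⟨k + 1, hk⟩ < w ⟨k, by omega⟩ :=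
          Fin.lt_def.2 ((mem_desSet_succ hk).1 hdes)
        have h4 := Fin.lt_def.1 (h3.2 hw)
        rw [if_pos hdes] at h2
        omega
      · rw [if_neg hdes] at h2
        have h4 := Fin.le_def.1 h3.1
        omega
end compat

lemma shift_sum {p m : ℕ} (hp0 : 0 < p) (w : Fin p → Fin m) (n : ℕ) :
    ∑ G ∈ (Finset.univ : Finset (Fin p → Fin (n + 1))).filter (fun G => Compat w G),
        X ^ (∑ i, (G i : ℕ))
    = if (desSet p (fun a => ((w a : ℕ)))).card ≤ n then
        X ^ ((desSet p (fun a => ((w a : ℕ)))).sum id)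
          * Sbox (n - (desSet p (fun a => ((w a : ℕ)))).card) p
      else 0 := by
  classical
  set f := fun a : Fin p => ((w a : ℕ)) with hf
  set d := (desSet p f).card with hdd
  by_cases hd : d ≤ n
  · rw [if_pos hd, Sbox, Finset.mul_sum]
    symm
    refine Finset.sum_bij'
      (fun μ hμ => fun i : Fin p => (⟨(μ i : ℕ) + Dk p f i.val, by
        have h1 : (μ i : ℕ) ≤ n - d := Fin.is_le _
        have h2 : Dk p f i.val ≤ d := Dk_le p f i.val
        omega⟩ : Fin (n + 1)))
      (fun G hG => fun i : Fin p => (⟨(G i : ℕ) - Dk p f i.val, by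
        have hcom : Compat w G := (Finset.mem_filter.1 hG).2
        have h1 := hcom.le_head i.val i.isLt hp0
        rw [← hf] at h1
        have h2 : (G ⟨0, hp0⟩ : ℕ) ≤ n := Fin.is_le _
        have h3 : Dk p f i.val ≤ d := Dk_le p f i.val
        have e : (⟨i.val, i.isLt⟩ : Fin p) = i := by ext; rfl
        rw [e] at h1
        omega⟩ : Fin (n - d + 1)))
      ?_ ?_ ?_ ?_ ?_
    · -- forward membership : Compat
      intro μ hμ
      have hμa : Antitone μ := (Finset.mem_filter.1 hμ).2
      refine Finset.mem_filter.2 ⟨Finset.mem_univ _, ?_⟩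
      intro k hk
      have hDk := Dk_succ p f k
      have hμk : (μ ⟨k + 1, hk⟩ : ℕ) ≤ (μ ⟨k, by omega⟩ : ℕ) :=
        Fin.le_def.1 (hμa (by rw [Fin.le_def]; simp))
      constructor
      · rw [Fin.le_def]
        simp only []
        by_cases hdes : k + 1 ∈ desSet p f
        · rw [if_pos hdes] at hDk; omega
        · rw [if_neg hdes] at hDk; omega
      · intro hw
        have hdes : k + 1 ∈ desSet p f := (mem_desSet_succ hk).2 (Fin.lt_def.1 hw)
        rw [if_pos hdes] at hDk
        rw [Fin.lt_def]
        simp only []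
        omega
    · -- backward membership : Antitone
      intro G hG
      have hcom : Compat w G := (Finset.mem_filter.1 hG).2
      refine Finset.mem_filter.2 ⟨Finset.mem_univ _, ?_⟩
      apply antitone_of_adjacent
      intro k hk
      have hDk := Dk_succ p f k
      have h3 := hcom k hk
      have h5 := hcom.ge_D (k + 1) hk
      rw [← hf] at h5
      rw [Fin.le_def]
      simp only []
      by_cases hdes : k + 1 ∈ desSet p f
      · have hw : w ⟨k + 1, hk⟩ < w ⟨k, by omega⟩ :=
          Fin.lt_def.2 ((mem_desSet_succ hk).1 hdes)
        have h4 := Fin.lt_def.1 (h3.2 hw)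
        rw [if_pos hdes] at hDk
        omega
      · have h4 := Fin.le_def.1 h3.1
        rw [if_neg hdes] at hDk
        omega
    · -- left inverse
      intro μ hμ
      funext i
      ext
      simp only []
      omega
    · -- right inverse
      intro G hG
      have hcom : Compat w G := (Finset.mem_filter.1 hG).2
      funext i
      ext
      simp only []
      have h5 := hcom.ge_D i.val i.isLt
      rw [← hf] at h5
      have e : (⟨i.val, i.isLt⟩ : Fin p) = i := by ext; rfl
      rw [e] at h5
      omega
    · -- weights
      intro μ hμ
      rw [← pow_add]
      congr 1
      have hsum : ∑ i : Fin p, ((⟨(μ i : ℕ) + Dk p f i.val, by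
          have h1 : (μ i : ℕ) ≤ n - d := Fin.is_le _
          have h2 : Dk p f i.val ≤ d := Dk_le p f i.val
          omega⟩ : Fin (n + 1)) : ℕ) = ∑ i : Fin p, ((μ i : ℕ) + Dk p f i.val) := rfl
      rw [hsum, Finset.sum_add_distrib]
      have : ∑ i : Fin p, Dk p f i.val = ∑ k ∈ Finset.range p, Dk p f k :=
        Fin.sum_univ_eq_sum_range (fun k => Dk p f k) p
      rw [this, sum_Dk]
      omega
  · rw [if_neg hd]
    have hempty : (Finset.univ : Finset (Fin p → Fin (n + 1))).filter (fun G => Compat w G) = ∅ := by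
      rw [Finset.filter_eq_empty_iff]
      intro G _
      intro hcom
      have h1 := hcom.le_head (p - 1) (by omega) hp0
      rw [← hf] at h1
      rw [Dk_zero_of_ge p f (p - 1) (by omega)] at h1
      have h2 : (G ⟨0, hp0⟩ : ℕ) ≤ n := Fin.is_le _
      omega
    rw [hempty, Finset.sum_empty]

/-! ### merge bijection infrastructure -/

section merge
variable {n m : ℕ}

/-- order on pairs : value decreasing, ties broken by letter increasing -/
def mergeRel : (Fin (n + 1) × Fin m) → (Fin (n + 1) × Fin m) → Prop :=
  fun a b => b.1 < a.1 ∨ (a.1 = b.1 ∧ a.2 ≤ b.2)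

instance : DecidableRel (@mergeRel n m) := fun a b => by unfold mergeRel; infer_instance

instance : IsTrans (Fin (n + 1) × Fin m) mergeRel := by
  constructor
  rintro a b c (h1 | ⟨h1, h1'⟩) (h2 | ⟨h2, h2'⟩)
  · exact Or.inl (lt_trans h2 h1)
  · exact Or.inl (h2 ▸ h1)
  · exact Or.inl (h1 ▸ h2)
  · exact Or.inr ⟨h1.trans h2, h1'.trans h2'⟩

instance : IsAntisymm (Fin (n + 1) × Fin m) mergeRel := by
  constructor
  rintro a b (h1 | ⟨h1, h1'⟩) (h2 | ⟨h2, h2'⟩)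
  · exact absurd (lt_trans h1 h2) (lt_irrefl _)
  · exact absurd (h2 ▸ h1) (lt_irrefl _)
  · exact absurd (h1 ▸ h2) (lt_irrefl _)
  · exact Prod.ext h1 (le_antisymm h1' h2')

instance : IsTotal (Fin (n + 1) × Fin m) mergeRel := by
  constructor
  intro a b
  rcases lt_trichotomy a.1 b.1 with h | h | h
  · exact Or.inr (Or.inl h)
  · rcases le_total a.2 b.2 with h' | h'
    · exact Or.inl (Or.inr ⟨h, h'⟩)
    · exact Or.inr (Or.inr ⟨h.symm, h'⟩)
  · exact Or.inl (Or.inl h)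

end merge

lemma ofFn_get_cast {α : Type*} {k : ℕ} (l : List α) (h : l.length = k) :
    List.ofFn (fun i : Fin k => l.get ⟨i.val, by omega⟩) = l := by
  subst h; simp

/-- uniqueness of the antitone enumeration of a multiset -/
lemma antitone_unique {k : ℕ} {α : Type*} [LinearOrder α] (f g : Fin k → α)
    (hf : Antitone f) (hg : Antitone g)
    (h : Multiset.map f Finset.univ.val = Multiset.map g Finset.univ.val) : f = g := by
  haveI : IsAntisymm α (fun a b : α => b ≤ a) := ⟨fun a b h1 h2 => le_antisymm h2 h1⟩
  have hofn : ∀ q : Fin k → α, Multiset.map q Finset.univ.val = ↑(List.ofFn q) := by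
    intro q
    rw [List.ofFn_eq_map]
    have : (Finset.univ : Finset (Fin k)).val = ↑(List.finRange k) := by
      simp [Finset.univ, Fintype.elems, List.finRange]
    rw [this]
    rfl
  rw [hofn f, hofn g, Multiset.coe_eq_coe] at h
  have hsf : List.Pairwise (fun a b : α => b ≤ a) (List.ofFn f) :=
    List.pairwise_ofFn.2 (fun i j hij => hf (le_of_lt hij))
  have hsg : List.Pairwise (fun a b : α => b ≤ a) (List.ofFn g) :=
    List.pairwise_ofFn.2 (fun i j hij => hg (le_of_lt hij))
  exact List.ofFn_injective (List.Perm.eq_of_pairwise' hsf hsg h)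

/-- multiset map as a sum of singletons -/
lemma map_eq_sum_singleton {ι β : Type*} (s : Finset ι) (f : ι → β) :
    s.val.map f = ∑ a ∈ s, ({f a} : Multiset β) := by
  induction s using Finset.cons_induction with
  | empty => simp
  | cons a s ha ih =>
      rw [Finset.sum_cons, ← ih, Finset.cons_val, Multiset.map_cons, ← Multiset.singleton_add]

/-- reindexing a multiset map along `orderEmbOfFin` -/
lemma map_univ_orderEmbOfFin {α β : Type*} [LinearOrder α] (s : Finset α) {k : ℕ}
    (h : s.card = k) (f : α → β) :
    Multiset.map (fun i : Fin k => f (s.orderEmbOfFin h i)) Finset.univ.val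
      = Multiset.map f s.val := by
  have hmap : Finset.univ.map ⟨fun i : Fin k => s.orderEmbOfFin h i,
      (s.orderEmbOfFin h).injective⟩ = s := by
    ext a
    simp only [Finset.mem_map, Finset.mem_univ, true_and, Function.Embedding.coeFn_mk]
    constructor
    · rintro ⟨i, rfl⟩
      exact Finset.orderEmbOfFin_mem s h i
    · intro ha
      have : a ∈ Set.range (s.orderEmbOfFin h) := by
        rw [Finset.range_orderEmbOfFin]; exact ha
      obtain ⟨i, hi⟩ := this
      exact ⟨i, hi⟩
  have := congrArg Finset.val hmap
  rw [Finset.map_val] at this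
  rw [← this, Multiset.map_map]
  rfl

lemma countP_finset_sum {ι β : Type*} (s : Finset ι) (g : ι → Multiset β)
    (P : β → Prop) [DecidablePred P] :
    Multiset.countP P (∑ i ∈ s, g i) = ∑ i ∈ s, Multiset.countP P (g i) := by
  induction s using Finset.cons_induction with
  | empty => simp
  | cons a s ha ih => rw [Finset.sum_cons, Finset.sum_cons, Multiset.countP_add, ih]

lemma filter_finset_sum {ι β : Type*} (s : Finset ι) (g : ι → Multiset β)
    (P : β → Prop) [DecidablePred P] :
    Multiset.filter P (∑ i ∈ s, g i) = ∑ i ∈ s, Multiset.filter P (g i) := by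
  induction s using Finset.cons_induction with
  | empty => simp
  | cons a s ha ih => rw [Finset.sum_cons, Finset.sum_cons, Multiset.filter_add, ih]

lemma map_multiset_finset_sum {ι β γ : Type*} (s : Finset ι) (g : ι → Multiset β)
    (f : β → γ) :
    Multiset.map f (∑ i ∈ s, g i) = ∑ i ∈ s, Multiset.map f (g i) := by
  induction s using Finset.cons_induction with
  | empty => simp
  | cons a s ha ih => rw [Finset.sum_cons, Finset.sum_cons, Multiset.map_add, ih]

lemma sum_multiset_finset_sum {ι β : Type*} [AddCommMonoid β] (s : Finset ι)
    (g : ι → Multiset β) :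
    (∑ i ∈ s, g i).sum = ∑ i ∈ s, (g i).sum := by
  induction s using Finset.cons_induction with
  | empty => simp
  | cons a s ha ih => rw [Finset.sum_cons, Finset.sum_cons, Multiset.sum_add, ih]

lemma map_univ_eq_ofFn {k : ℕ} {α : Type*} (q : Fin k → α) :
    Multiset.map q Finset.univ.val = ↑(List.ofFn q) := by
  rw [List.ofFn_eq_map]
  have : (Finset.univ : Finset (Fin k)).val = ↑(List.finRange k) := by
    simp [Finset.univ, Fintype.elems, List.finRange]
  rw [this]
  rfl

section bigmerge
variable {m : ℕ} (par : Fin m → ℕ) (n : ℕ)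

/-- the merged multiset of (value, letter) pairs -/
def mergeM (y : (j : Fin m) → Fin (par j) → Fin (n + 1)) : Multiset (Fin (n + 1) × Fin m) :=
  ∑ j : Fin m, Multiset.map (fun i => (y j i, j)) Finset.univ.val

lemma card_mergeM (y : (j : Fin m) → Fin (par j) → Fin (n + 1)) :
    Multiset.card (mergeM par n y) = ∑ j, par j := by
  rw [mergeM]
  rw [Multiset.card_sum]
  apply Finset.sum_congr rfl
  intro j _
  rw [Multiset.card_map]
  simp

/-- the merged, sorted list -/
noncomputable def mergeList (y : (j : Fin m) → Fin (par j) → Fin (n + 1)) :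
    List (Fin (n + 1) × Fin m) := Multiset.sort (mergeM par n y) mergeRel

lemma length_mergeList (y : (j : Fin m) → Fin (par j) → Fin (n + 1)) :
    (mergeList par n y).length = ∑ j, par j := by
  rw [mergeList, Multiset.length_sort, card_mergeM]

variable {p : ℕ} (hp : p = ∑ j, par j)

/-- the word of the merged biword -/
noncomputable def mergeW (y : (j : Fin m) → Fin (par j) → Fin (n + 1)) : Fin p → Fin m :=
  fun i => ((mergeList par n y).get ⟨i.val, by rw [length_mergeList, ← hp]; exact i.isLt⟩).2

/-- the values of the merged biword -/
noncomputable def mergeG (y : (j : Fin m) → Fin (par j) → Fin (n + 1)) : Fin p → Fin (n + 1) :=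
  fun i => ((mergeList par n y).get ⟨i.val, by rw [length_mergeList, ← hp]; exact i.isLt⟩).1

lemma map_pair_merge (y : (j : Fin m) → Fin (par j) → Fin (n + 1)) :
    Multiset.map (fun i : Fin p => (mergeG par n hp y i, mergeW par n hp y i))
      Finset.univ.val = mergeM par n y := by
  have h1 : (fun i : Fin p => (mergeG par n hp y i, mergeW par n hp y i))
      = fun i : Fin p => (mergeList par n y).get
          ⟨i.val, by rw [length_mergeList, ← hp]; exact i.isLt⟩ := rfl
  rw [h1, map_univ_eq_ofFn, ofFn_get_cast _ (by rw [length_mergeList, ← hp]), mergeList,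
    Multiset.sort_eq]

lemma count_mergeW (y : (j : Fin m) → Fin (par j) → Fin (n + 1)) (j : Fin m) :
    (Finset.univ.filter (fun i : Fin p => mergeW par n hp y i = j)).card = par j := by
  classical
  have h1 : (Finset.univ.filter (fun i : Fin p => mergeW par n hp y i = j)).card
      = Multiset.countP (fun a : Fin (n+1) × Fin m => a.2 = j)
          (Multiset.map (fun i : Fin p => (mergeG par n hp y i, mergeW par n hp y i))
            Finset.univ.val) := by
    rw [Multiset.countP_map, Finset.card_def, Finset.filter_val]
  rw [h1, map_pair_merge, mergeM, countP_finset_sum]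
  have h2 : ∀ j' : Fin m,
      Multiset.countP (fun a : Fin (n+1) × Fin m => a.2 = j)
        (Multiset.map (fun i => (y j' i, j')) Finset.univ.val)
      = if j' = j then par j' else 0 := by
    intro j'
    rw [Multiset.countP_map]
    by_cases h : j' = j
    · rw [if_pos h, Multiset.filter_eq_self.2 (fun a _ => h), ← Finset.card_def]
      simp
    · rw [if_neg h, Multiset.filter_eq_nil.2 (fun a _ => h), Multiset.card_zero]
  rw [Finset.sum_congr rfl (fun j' _ => h2 j')]
  simp

lemma compat_merge (y : (j : Fin m) → Fin (par j) → Fin (n + 1)) :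
    Compat (mergeW par n hp y) (mergeG par n hp y) := by
  intro k hk
  have hsorted : List.Pairwise mergeRel (mergeList par n y) :=
    Multiset.pairwise_sort _ _
  have hlen : (mergeList par n y).length = p := by rw [length_mergeList, ← hp]
  have hrel : mergeRel ((mergeList par n y).get ⟨k, by omega⟩)
      ((mergeList par n y).get ⟨k + 1, by omega⟩) := by
    apply List.pairwise_iff_get.1 hsorted
    rw [Fin.lt_def]
    exact Nat.lt_succ_self k
  rcases hrel with h | ⟨h, h'⟩
  · exact ⟨le_of_lt h, fun _ => h⟩
  · refine ⟨le_of_eq h.symm, ?_⟩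
    intro hw
    exact absurd h' (not_le.2 hw)

lemma fibervals_merge (y : (j : Fin m) → Fin (par j) → Fin (n + 1)) (j : Fin m) :
    Multiset.map (mergeG par n hp y)
      ((Finset.univ.filter (fun i : Fin p => mergeW par n hp y i = j)).val)
    = Multiset.map (y j) Finset.univ.val := by
  classical
  set w := mergeW par n hp y
  set G := mergeG par n hp y
  have h1 : Multiset.map G ((Finset.univ.filter (fun i : Fin p => w i = j)).val)
      = Multiset.map Prod.fst (Multiset.filter (fun a : Fin (n+1) × Fin m => a.2 = j)
          (Multiset.map (fun i : Fin p => (G i, w i)) Finset.univ.val)) := by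
    rw [Multiset.filter_map, Multiset.map_map, Finset.filter_val]
    rfl
  rw [h1, map_pair_merge, mergeM]
  rw [filter_finset_sum]
  have h2 : ∀ j' : Fin m, Multiset.filter (fun a : Fin (n+1) × Fin m => a.2 = j)
      (Multiset.map (fun i => (y j' i, j')) Finset.univ.val)
      = if j' = j then Multiset.map (fun i => (y j' i, j')) Finset.univ.val else 0 := by
    intro j'
    by_cases h : j' = j
    · rw [if_pos h, Multiset.filter_eq_self.2]
      intro a ha
      rw [Multiset.mem_map] at ha
      obtain ⟨i, _, rfl⟩ := ha
      exact h
    · rw [if_neg h, Multiset.filter_eq_nil.2]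
      intro a ha
      rw [Multiset.mem_map] at ha
      obtain ⟨i, _, rfl⟩ := ha
      exact h
  rw [Finset.sum_congr rfl (fun j' _ => h2 j'), Finset.sum_ite_eq' Finset.univ j
    (fun j' => Multiset.map (fun i => (y j' i, j')) Finset.univ.val)]
  rw [if_pos (Finset.mem_univ j), Multiset.map_map]
  rfl

end bigmerge

lemma merge_sum {m : ℕ} (par : Fin m → ℕ) (n : ℕ) {p : ℕ} (hp : p = ∑ j, par j) :
    ∑ y ∈ Fintype.piFinset (fun j : Fin m =>
        (Finset.univ : Finset (Fin (par j) → Fin (n + 1))).filter (fun g => Antitone g)),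
      (X : Polynomial ℤ) ^ (∑ j, ∑ i, ((y j i : ℕ)))
    = ∑ x ∈ (Finset.univ : Finset ((Fin p → Fin m) × (Fin p → Fin (n + 1)))).filter
        (fun x => (∀ j, (Finset.univ.filter (fun i => x.1 i = j)).card = par j)
          ∧ Compat x.1 x.2),
      X ^ (∑ i, ((x.2 i : ℕ))) := by
  classical
  refine Finset.sum_bij' (fun y _ => (mergeW par n hp y, mergeG par n hp y))
    (fun x hx => fun j => fun i : Fin (par j) =>
        x.2 ((Finset.univ.filter (fun a => x.1 a = j)).orderEmbOfFin
          ((Finset.mem_filter.1 hx).2.1 j) i))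
    ?_ ?_ ?_ ?_ ?_
  · -- backward-merge lands in the pair set
    intro y hy
    exact Finset.mem_filter.2 ⟨Finset.mem_univ _,
      ⟨count_mergeW par n hp y, compat_merge par n hp y⟩⟩
  · -- forward lands in the tuple set
    intro x hx
    rw [Fintype.mem_piFinset]
    intro j
    refine Finset.mem_filter.2 ⟨Finset.mem_univ _, ?_⟩
    exact ((Finset.mem_filter.1 hx).2.2.antitone).comp_monotone
      (OrderEmbedding.monotone _)
  · -- left inverse : forward ∘ backward = id on tuples
    intro y hy
    funext j
    have hy' : Antitone (y j) := by
      rw [Fintype.mem_piFinset] at hy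
      exact (Finset.mem_filter.1 (hy j)).2
    apply antitone_unique _ _ ?_ hy'
    · -- multisets of values agree
      have h1 : Multiset.map (fun i : Fin (par j) => mergeG par n hp y
            ((Finset.univ.filter (fun a => mergeW par n hp y a = j)).orderEmbOfFin
              (count_mergeW par n hp y j) i)) Finset.univ.val
          = Multiset.map (mergeG par n hp y)
              ((Finset.univ.filter (fun a => mergeW par n hp y a = j)).val) :=
        map_univ_orderEmbOfFin _ _ _
      beta_reduce
      rw [h1, fibervals_merge]
    · -- antitone
      exact ((compat_merge par n hp y).antitone).comp_monotone (OrderEmbedding.monotone _)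
  · -- right inverse : backward ∘ forward = id on pairs
    intro x hx
    obtain ⟨-, hcnt, hcom⟩ :
        x ∈ Finset.univ ∧ (∀ j, (Finset.univ.filter (fun i => x.1 i = j)).card = par j)
          ∧ Compat x.1 x.2 := by
      have := Finset.mem_filter.1 hx
      exact ⟨this.1, this.2.1, this.2.2⟩
    set w := x.1 with hw
    set G := x.2 with hG
    set y0 : (j : Fin m) → Fin (par j) → Fin (n + 1) := fun j => fun i : Fin (par j) =>
        x.2 ((Finset.univ.filter (fun a => x.1 a = j)).orderEmbOfFin
          ((Finset.mem_filter.1 hx).2.1 j) i) with hy0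
    have step1 : mergeM par n y0 = Multiset.map (fun i : Fin p => (G i, w i))
        Finset.univ.val := by
      have hblock : ∀ j : Fin m, Multiset.map (fun i : Fin (par j) => (y0 j i, j))
          Finset.univ.val
          = Multiset.map (fun a : Fin p => (G a, j))
              ((Finset.univ.filter (fun a => w a = j)).val) :=
        fun j => map_univ_orderEmbOfFin (Finset.univ.filter (fun a => w a = j))
          ((Finset.mem_filter.1 hx).2.1 j) (fun a => (G a, j))
      rw [mergeM]
      rw [Finset.sum_congr rfl (fun j _ => hblock j)]
      have hcongr : ∀ j : Fin m, Multiset.map (fun a : Fin p => (G a, j))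
          ((Finset.univ.filter (fun a => w a = j)).val)
          = Multiset.map (fun a : Fin p => (G a, w a))
              ((Finset.univ.filter (fun a => w a = j)).val) := by
        intro j
        apply Multiset.map_congr rfl
        intro a ha
        rw [Finset.mem_val, Finset.mem_filter] at ha
        rw [ha.2]
      rw [Finset.sum_congr rfl (fun j _ => hcongr j)]
      rw [Finset.sum_congr rfl (fun j _ => map_eq_sum_singleton
        (Finset.univ.filter (fun a => w a = j)) (fun a => (G a, w a)))]
      rw [Finset.sum_fiberwise Finset.univ w (fun a => ({(G a, w a)} : Multiset _))]
      rw [map_eq_sum_singleton]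
    have step2 : mergeList par n y0 = List.ofFn (fun i : Fin p => (G i, w i)) := by
      apply (fun h1 h2 h3 => List.Perm.eq_of_pairwise' (r := mergeRel) h2 h3 h1)
      · rw [← Multiset.coe_eq_coe, mergeList, Multiset.sort_eq, step1, map_univ_eq_ofFn]
      · exact Multiset.pairwise_sort _ _
      · rw [List.pairwise_ofFn]
        intro i j hij
        apply rel_of_adjacent mergeRel (fun i : Fin p => (G i, w i)) ?_ i j hij
        intro k hk
        obtain ⟨h1, h2⟩ := hcom k hk
        rcases lt_or_eq_of_le h1 with hlt | heq
        · exact Or.inl hlt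
        · refine Or.inr ⟨heq.symm, ?_⟩
          by_contra hcon
          rw [not_le] at hcon
          exact absurd heq (ne_of_lt (h2 hcon))
    have hgets : ∀ (i : Fin p), (mergeList par n y0).get
        ⟨i.val, by rw [length_mergeList, ← hp]; exact i.isLt⟩ = (G i, w i) := by
      intro i
      rw [List.get_of_eq step2, List.get_ofFn]
      rfl
    beta_reduce
    rw [Prod.ext_iff]
    constructor
    · funext i
      show ((mergeList par n y0).get _).2 = w i
      rw [hgets i]
    · funext i
      show ((mergeList par n y0).get _).1 = G i
      rw [hgets i]
  · -- weights agree
    intro y hy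
    beta_reduce
    congr 1
    have e2 : ∀ j : Fin m, (Multiset.map (fun a : Fin (n+1) × Fin m => ((a.1 : ℕ)))
        (Multiset.map (fun i : Fin (par j) => (y j i, j)) Finset.univ.val)).sum
        = ∑ i : Fin (par j), ((y j i : ℕ)) := by
      intro j
      rw [Multiset.map_map]
      exact (Finset.sum_eq_multiset_sum Finset.univ (fun i => ((y j i : ℕ)))).symm
    symm
    calc ∑ i : Fin p, ((mergeG par n hp y i : ℕ))
        = (Multiset.map (fun a : Fin (n+1) × Fin m => ((a.1 : ℕ)))
            (Multiset.map (fun i : Fin p => (mergeG par n hp y i, mergeW par n hp y i))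
              Finset.univ.val)).sum := by
          rw [Multiset.map_map]
          exact Finset.sum_eq_multiset_sum Finset.univ
            (fun i => ((mergeG par n hp y i : ℕ)))
      _ = (Multiset.map (fun a : Fin (n+1) × Fin m => ((a.1 : ℕ))) (mergeM par n y)).sum := by
          rw [map_pair_merge]
      _ = ∑ j : Fin m, (Multiset.map (fun a : Fin (n+1) × Fin m => ((a.1 : ℕ)))
            (Multiset.map (fun i : Fin (par j) => (y j i, j)) Finset.univ.val)).sum := by
          rw [mergeM, map_multiset_finset_sum, sum_multiset_finset_sum]
      _ = ∑ j : Fin m, ∑ i : Fin (par j), ((y j i : ℕ)) :=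
          Finset.sum_congr rfl (fun j _ => e2 j)

lemma keyB (qbinom : ℕ → ℕ → Polynomial ℤ)
    (hqb : ∀ a b : ℕ, b ≤ a → qbinom a b * (qpoch b * qpoch (a - b)) = qpoch a)
    {m : ℕ} (hm : 0 < m) (par : Fin m → ℕ) (hpar : ∀ j, 0 < par j)
    {p : ℕ} (hp : p = ∑ j, par j) (n : ℕ) :
    ∏ j, qbinom (n + par j) (par j)
    = ∑ w ∈ Finset.univ.filter (fun w : Fin p → Fin m =>
        ∀ j, (Finset.univ.filter (fun i => w i = j)).card = par j),
        if (desSet p fun k => ((w k : ℕ))).card ≤ n then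
          X ^ ((desSet p fun k => ((w k : ℕ))).sum id)
            * qbinom (n - (desSet p fun k => ((w k : ℕ))).card + p) p
        else 0 := by
  classical
  have hp0 : 0 < p := by
    rw [hp]
    exact Finset.sum_pos (fun j _ => hpar j) ⟨⟨0, hm⟩, Finset.mem_univ _⟩
  calc ∏ j, qbinom (n + par j) (par j)
      = ∏ j, Sbox n (par j) :=
        Finset.prod_congr rfl (fun j _ => qb_eq_Sbox qbinom hqb (par j) n)
    _ = ∑ y ∈ Fintype.piFinset (fun j : Fin m =>
          (Finset.univ : Finset (Fin (par j) → Fin (n + 1))).filter (fun g => Antitone g)),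
          ∏ j, (X : Polynomial ℤ) ^ (∑ i, ((y j i : ℕ))) := by
        simp only [Sbox]
        rw [Finset.prod_univ_sum]
    _ = ∑ y ∈ Fintype.piFinset (fun j : Fin m =>
          (Finset.univ : Finset (Fin (par j) → Fin (n + 1))).filter (fun g => Antitone g)),
          (X : Polynomial ℤ) ^ (∑ j, ∑ i, ((y j i : ℕ))) :=
        Finset.sum_congr rfl (fun y _ => Finset.prod_pow_eq_pow_sum _ _ _)
    _ = ∑ x ∈ (Finset.univ : Finset ((Fin p → Fin m) × (Fin p → Fin (n + 1)))).filter
          (fun x => (∀ j, (Finset.univ.filter (fun i => x.1 i = j)).card = par j)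
            ∧ Compat x.1 x.2),
          (X : Polynomial ℤ) ^ (∑ i, ((x.2 i : ℕ))) := merge_sum par n hp
    _ = ∑ w ∈ Finset.univ.filter (fun w : Fin p → Fin m =>
          ∀ j, (Finset.univ.filter (fun i => w i = j)).card = par j),
          ∑ G ∈ (Finset.univ : Finset (Fin p → Fin (n + 1))).filter (fun G => Compat w G),
            (X : Polynomial ℤ) ^ (∑ i, ((G i : ℕ))) := by
        rw [Finset.sum_filter, Fintype.sum_prod_type]
        rw [Finset.sum_filter]
        apply Finset.sum_congr rfl
        intro w _
        rw [Finset.sum_filter]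
        by_cases hP : ∀ j, (Finset.univ.filter (fun i => w i = j)).card = par j
        · rw [if_pos hP]
          apply Finset.sum_congr rfl
          intro G _
          by_cases hC : Compat w G
          · rw [if_pos hC, if_pos ⟨hP, hC⟩]
          · rw [if_neg hC, if_neg (fun h => hC h.2)]
        · rw [if_neg hP]
          apply Finset.sum_eq_zero
          intro G _
          rw [if_neg (fun h => hP h.1)]
    _ = ∑ w ∈ Finset.univ.filter (fun w : Fin p → Fin m =>
          ∀ j, (Finset.univ.filter (fun i => w i = j)).card = par j),
          if (desSet p fun k => ((w k : ℕ))).card ≤ n then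
            X ^ ((desSet p fun k => ((w k : ℕ))).sum id)
              * Sbox (n - (desSet p fun k => ((w k : ℕ))).card) p
          else 0 :=
        Finset.sum_congr rfl (fun w _ => shift_sum hp0 w n)
    _ = _ := by
        apply Finset.sum_congr rfl
        intro w _
        by_cases hd : (desSet p fun k => ((w k : ℕ))).card ≤ n
        · rw [if_pos hd, if_pos hd, ← qb_eq_Sbox qbinom hqb p
            (n - (desSet p fun k => ((w k : ℕ))).card)]
        · rw [if_neg hd, if_neg hd]

section ps

lemma coeff_one_sub_CX_mul (a : Polynomial ℤ) (f : PowerSeries (Polynomial ℤ)) :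
    (∀ n : ℕ, (PowerSeries.coeff (n+1)) ((1 - PowerSeries.C a * PowerSeries.X) * f)
      = (PowerSeries.coeff (n+1)) f - a * (PowerSeries.coeff n) f)
    ∧ (PowerSeries.coeff 0) ((1 - PowerSeries.C a * PowerSeries.X) * f)
      = (PowerSeries.coeff 0) f := by
  have hrw : (1 - PowerSeries.C a * PowerSeries.X) * f
      = f - PowerSeries.C a * (PowerSeries.X * f) := by ring
  constructor
  · intro n
    rw [hrw, map_sub, PowerSeries.coeff_C_mul, PowerSeries.coeff_succ_X_mul]
  · rw [hrw, map_sub, PowerSeries.coeff_C_mul, PowerSeries.coeff_zero_X_mul, mul_zero, sub_zero]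

lemma keyA (qbinom : ℕ → ℕ → Polynomial ℤ)
    (hqb : ∀ a b : ℕ, b ≤ a → qbinom a b * (qpoch b * qpoch (a - b)) = qpoch a) :
    ∀ p : ℕ, (∏ i ∈ Finset.range (p + 1),
        (1 - (PowerSeries.C : Polynomial ℤ →+* PowerSeries (Polynomial ℤ)) (X ^ i) * PowerSeries.X)) *
      PowerSeries.mk (fun n => qbinom (n + p) p) = 1 := by
  have step : ∀ p : ℕ, (1 - (PowerSeries.C : Polynomial ℤ →+* PowerSeries (Polynomial ℤ)) (X ^ (p+1)) * PowerSeries.X) *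
      PowerSeries.mk (fun n => qbinom (n + (p+1)) (p+1))
      = PowerSeries.mk (fun n => qbinom (n + p) p) := by
    intro p
    apply PowerSeries.ext
    intro n
    obtain ⟨hsucc, hzero⟩ := coeff_one_sub_CX_mul (X ^ (p+1))
      (PowerSeries.mk (fun n => qbinom (n + (p+1)) (p+1)))
    match n with
    | 0 =>
        rw [hzero, PowerSeries.coeff_mk, PowerSeries.coeff_mk]
        rw [(show 0 + (p+1) = p+1 by omega), (show 0 + p = p by omega),
          qb_self qbinom hqb, qb_self qbinom hqb]
    | (n+1) =>
        rw [hsucc, PowerSeries.coeff_mk, PowerSeries.coeff_mk, PowerSeries.coeff_mk]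
        have hpb := pascalB qbinom hqb n p
        rw [(show n + 1 + (p + 1) = n + p + 2 by omega), hpb,
          (show n + (p+1) = n + p + 1 by omega), (show n + 1 + p = n + p + 1 by omega)]
        ring
  intro p
  induction p with
  | zero =>
      rw [Finset.prod_range_one]
      apply PowerSeries.ext
      intro n
      obtain ⟨hsucc, hzero⟩ := coeff_one_sub_CX_mul ((X : Polynomial ℤ) ^ 0)
        (PowerSeries.mk (fun n => qbinom (n + 0) 0))
      match n with
      | 0 => rw [hzero, PowerSeries.coeff_mk, qb_zero qbinom hqb, PowerSeries.coeff_one]; rfl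
      | (n+1) =>
          rw [hsucc, PowerSeries.coeff_mk, PowerSeries.coeff_mk, qb_zero qbinom hqb,
            qb_zero qbinom hqb, PowerSeries.coeff_one]
          simp
  | succ p ih =>
      rw [Finset.prod_range_succ, mul_assoc, step p, ih]
end ps


end aux

/-- **MacMahon's formula (q-Simon Newcomb problem)** : in `(ℤ[q])[[t]]`,
`(∏_{i=0}^{p} (1 − t q^i)) ⬝ ∑_{n≥0} tⁿ ∏_j binom(n+p_j, p_j)
  = ∑_w t^{des w} q^{maj w}`,
the sum over multiset permutations `w` of `{1^{p₁},…,m^{p_m}}`, where `binom` is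
the Gaussian binomial coefficient, pinned down by its defining identity
`binom(a,b) (q)_b (q)_{a-b} = (q)_a` for `b ≤ a`. -/
theorem macmahon_q_simon_newcomb (m : ℕ) (hm : 0 < m) (par : Fin m → ℕ)
    (hpar : ∀ j, 0 < par j) (p : ℕ) (hp : p = ∑ j, par j)
    (qbinom : ℕ → ℕ → Polynomial ℤ)
    (hqb : ∀ a b : ℕ, b ≤ a → qbinom a b * (qpoch b * qpoch (a - b)) = qpoch a) :
    (∏ i ∈ Finset.range (p + 1),
        (1 - (PowerSeries.C : Polynomial ℤ →+* PowerSeries (Polynomial ℤ)) (Polynomial.X ^ i) * PowerSeries.X)) *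
      PowerSeries.mk (fun n => ∏ j, qbinom (n + par j) (par j)) =
    ∑ w ∈ Finset.univ.filter (fun w : Fin p → Fin m =>
        ∀ j : Fin m, (Finset.univ.filter fun i : Fin p => w i = j).card = par j),
      (PowerSeries.C : Polynomial ℤ →+* PowerSeries (Polynomial ℤ))
          (Polynomial.X ^ ((desSet p fun k => ((w k : ℕ))).sum id)) *
        PowerSeries.X ^ (desSet p fun k => ((w k : ℕ))).card := by
  classical
  have hS : PowerSeries.mk (fun n => ∏ j, qbinom (n + par j) (par j))
      = PowerSeries.mk (fun n => qbinom (n + p) p) *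
        ∑ w ∈ Finset.univ.filter (fun w : Fin p → Fin m =>
            ∀ j : Fin m, (Finset.univ.filter fun i : Fin p => w i = j).card = par j),
          (PowerSeries.C : Polynomial ℤ →+* PowerSeries (Polynomial ℤ))
              (Polynomial.X ^ ((desSet p fun k => ((w k : ℕ))).sum id)) *
            PowerSeries.X ^ (desSet p fun k => ((w k : ℕ))).card := by
    apply PowerSeries.ext
    intro n
    rw [PowerSeries.coeff_mk, Finset.mul_sum, map_sum]
    rw [keyB qbinom hqb hm par hpar hp n]
    apply Finset.sum_congr rfl
    intro w _
    have hcomm : PowerSeries.mk (fun n => qbinom (n + p) p) *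
        ((PowerSeries.C : Polynomial ℤ →+* PowerSeries (Polynomial ℤ))
            (Polynomial.X ^ ((desSet p fun k => ((w k : ℕ))).sum id)) *
          PowerSeries.X ^ (desSet p fun k => ((w k : ℕ))).card)
        = (PowerSeries.C : Polynomial ℤ →+* PowerSeries (Polynomial ℤ))
            (Polynomial.X ^ ((desSet p fun k => ((w k : ℕ))).sum id)) *
          (PowerSeries.mk (fun n => qbinom (n + p) p) *
            PowerSeries.X ^ (desSet p fun k => ((w k : ℕ))).card) := by ring
    rw [hcomm, PowerSeries.coeff_C_mul, PowerSeries.coeff_mul_X_pow']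
    by_cases hd : (desSet p fun k => ((w k : ℕ))).card ≤ n
    · rw [if_pos hd, if_pos hd, PowerSeries.coeff_mk]
    · rw [if_neg hd, if_neg hd, mul_zero]
  rw [hS, ← mul_assoc, keyA qbinom hqb p, one_mul]
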